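/- (Weak-type L^1 bound for the coarsened maximal operator.) There exists a constant C depending only on the dimension d such that for every h ≥ 0, every φ ∈ L^1(ℝ^d), and every t > 0, the measure of the superlevel set {x ∈ ℝ^d : M_h(φ)(x) > t} is at most (C/t) · ∫_{ℝ^d} (⨍_{B_h(x)} |φ(y)| dy) dx, where for h = 0 the inner average is interpreted as |φ(x)|. -/

import Mathlib

open MeasureTheory Metric
open scoped ENNReal

noncomputable def coarseMax {d : ℕ} (h : ℝ) (φ : EuclideanSpace ℝ (Fin d) → ℝ)
    (x : EuclideanSpace ℝ (Fin d)) : ℝ≥0∞ :=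
  ⨆ (r : ℝ) (_ : h < r), ⨍⁻ y in ball x r, (‖φ y‖₊ : ℝ≥0∞) ∂volume

noncomputable def coarseAvg {d : ℕ} (h : ℝ) (φ : EuclideanSpace ℝ (Fin d) → ℝ)
    (x : EuclideanSpace ℝ (Fin d)) : ℝ≥0∞ :=
  if h = 0 then (‖φ x‖₊ : ℝ≥0∞) else ⨍⁻ y in ball x h, (‖φ y‖₊ : ℝ≥0∞) ∂volume

section Aux

variable {d : ℕ}

/-- Measurability of the local average. -/
lemma meas_inner_aux (h : ℝ) (f : EuclideanSpace ℝ (Fin d) → ℝ≥0∞) (hf : Measurable f) :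
    Measurable fun z : EuclideanSpace ℝ (Fin d) => ∫⁻ y in ball z h, f y ∂volume := by
  have hset : MeasurableSet
      {p : EuclideanSpace ℝ (Fin d) × EuclideanSpace ℝ (Fin d) | dist p.2 p.1 < h} :=
    (isOpen_lt (continuous_dist.comp (continuous_snd.prodMk continuous_fst))
      continuous_const).measurableSet
  have hF : Measurable fun p : EuclideanSpace ℝ (Fin d) × EuclideanSpace ℝ (Fin d) =>
      Set.indicator {p : EuclideanSpace ℝ (Fin d) × EuclideanSpace ℝ (Fin d) | dist p.2 p.1 < h}
        (fun q => f q.2) p :=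
    (hf.comp measurable_snd).indicator hset
  have heq : ∀ z : EuclideanSpace ℝ (Fin d), (∫⁻ y in ball z h, f y ∂volume) =
      ∫⁻ y, Set.indicator
        {p : EuclideanSpace ℝ (Fin d) × EuclideanSpace ℝ (Fin d) | dist p.2 p.1 < h}
        (fun q => f q.2) (z, y) ∂volume := by
    intro z
    rw [← lintegral_indicator measurableSet_ball]
    refine lintegral_congr fun y => ?_
    by_cases hy : dist y z < h <;>
      simp [Set.indicator, mem_ball, hy]
  simp_rw [heq]
  exact hF.lintegral_prod_right'

/-- Key inequality: the integral of `f` over `ball x r` is controlled by the integral of the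
local averages over `ball x (2r)`, provided `0 < h < r`. -/
lemma coarse_key (h r : ℝ) (hh : 0 < h) (hr : h < r)
    (f : EuclideanSpace ℝ (Fin d) → ℝ≥0∞) (hf : Measurable f) (x : EuclideanSpace ℝ (Fin d)) :
    ∫⁻ y in ball x r, f y ∂volume ≤
      ∫⁻ z in ball x (2*r), ⨍⁻ y in ball z h, f y ∂volume ∂volume := by
  set c := volume (ball (0 : EuclideanSpace ℝ (Fin d)) h) with hc
  have hc0 : c ≠ 0 := (measure_ball_pos volume 0 hh).ne'
  have hctop : c ≠ ∞ := measure_ball_lt_top.ne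
  have hball : ∀ z : EuclideanSpace ℝ (Fin d), volume (ball z h) = c := fun z =>
    Measure.addHaar_ball_center volume z h
  have havg : ∀ z : EuclideanSpace ℝ (Fin d),
      (⨍⁻ y in ball z h, f y ∂volume) = c⁻¹ * ∫⁻ y in ball z h, f y ∂volume := fun z => by
    rw [setLAverage_eq, hball z, ENNReal.div_eq_inv_mul]
  have hmeas := meas_inner_aux h f hf
  have hRHS : (∫⁻ z in ball x (2*r), ⨍⁻ y in ball z h, f y ∂volume ∂volume)
      = c⁻¹ * ∫⁻ z in ball x (2*r), ∫⁻ y in ball z h, f y ∂volume ∂volume := by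
    simp_rw [havg]
    exact lintegral_const_mul _ hmeas
  rw [hRHS]
  have main : c * ∫⁻ y in ball x r, f y ∂volume ≤
      ∫⁻ z in ball x (2*r), ∫⁻ y in ball z h, f y ∂volume ∂volume := by
    have hset : MeasurableSet
        {p : EuclideanSpace ℝ (Fin d) × EuclideanSpace ℝ (Fin d) | dist p.2 p.1 < h} :=
      (isOpen_lt (continuous_dist.comp (continuous_snd.prodMk continuous_fst))
        continuous_const).measurableSet
    set F : EuclideanSpace ℝ (Fin d) × EuclideanSpace ℝ (Fin d) → ℝ≥0∞ := fun p =>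
      Set.indicator {p : EuclideanSpace ℝ (Fin d) × EuclideanSpace ℝ (Fin d) | dist p.2 p.1 < h}
        (fun q => f q.2) p with hFdef
    have hF : Measurable F := (hf.comp measurable_snd).indicator hset
    have h1 : (∫⁻ z in ball x (2*r), ∫⁻ y in ball z h, f y ∂volume ∂volume)
        = ∫⁻ z in ball x (2*r), ∫⁻ y, F (z, y) ∂volume ∂volume := by
      refine lintegral_congr fun z => ?_
      rw [← lintegral_indicator measurableSet_ball]
      refine lintegral_congr fun y => ?_
      by_cases hy : dist y z < h <;>
        simp [F, Set.indicator, mem_ball, hy]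
    have h2 : (∫⁻ z in ball x (2*r), ∫⁻ y, F (z, y) ∂volume ∂volume)
        = ∫⁻ y, ∫⁻ z in ball x (2*r), F (z, y) ∂volume ∂volume := by
      exact lintegral_lintegral_swap hF.aemeasurable
    have h3 : ∀ y : EuclideanSpace ℝ (Fin d),
        (∫⁻ z in ball x (2*r), F (z, y) ∂volume)
          = f y * volume (ball y h ∩ ball x (2*r)) := by
      intro y
      have hFy : ∀ z : EuclideanSpace ℝ (Fin d),
          F (z, y) = Set.indicator (ball y h) (fun _ => f y) z := by
        intro z
        by_cases hz : dist y z < h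
        · have hz' : z ∈ ball y h := by rwa [mem_ball, dist_comm]
          simp [F, Set.indicator, hz, hz']
        · have hz' : z ∉ ball y h := by rwa [mem_ball, dist_comm]
          simp [F, Set.indicator, hz, hz']
      simp_rw [hFy]
      rw [lintegral_indicator_const measurableSet_ball,
        Measure.restrict_apply measurableSet_ball]
    rw [h1, h2]
    have hsub : ∀ y ∈ ball x r, ball y h ∩ ball x (2*r) = ball y h := by
      intro y hy
      refine Set.inter_eq_self_of_subset_left fun w hw => ?_
      rw [mem_ball] at hy hw ⊢
      calc dist w x ≤ dist w y + dist y x := dist_triangle w y x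
        _ < h + r := by linarith
        _ ≤ 2 * r := by linarith
    have hptwise : (∫⁻ y in ball x r, f y * volume (ball y h ∩ ball x (2*r)) ∂volume)
        = ∫⁻ y in ball x r, c * f y ∂volume :=
      setLIntegral_congr_fun measurableSet_ball
        (fun y hy => by rw [hsub y hy, hball y, mul_comm])
    calc c * ∫⁻ y in ball x r, f y ∂volume
        = ∫⁻ y in ball x r, c * f y ∂volume := (lintegral_const_mul c hf).symm
      _ = ∫⁻ y in ball x r, f y * volume (ball y h ∩ ball x (2*r)) ∂volume := hptwise.symm
      _ ≤ ∫⁻ y, f y * volume (ball y h ∩ ball x (2*r)) ∂volume :=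
          setLIntegral_le_lintegral _ _
      _ = ∫⁻ y, ∫⁻ z in ball x (2*r), F (z, y) ∂volume ∂volume := by
          refine lintegral_congr fun y => ?_
          rw [h3 y]
  calc (∫⁻ y in ball x r, f y ∂volume)
      = c⁻¹ * (c * ∫⁻ y in ball x r, f y ∂volume) := by
        rw [← mul_assoc, ENNReal.inv_mul_cancel hc0 hctop, one_mul]
    _ ≤ c⁻¹ * ∫⁻ z in ball x (2*r), ∫⁻ y in ball z h, f y ∂volume ∂volume := by
        exact mul_le_mul_right main _

/-- Abstract Vitali-type weak bound. -/
lemma weak_bound (g : EuclideanSpace ℝ (Fin d) → ℝ≥0∞)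
    (s : Set (EuclideanSpace ℝ (Fin d))) (K A : ℝ≥0∞) (R : ℝ)
    (hs : ∀ x ∈ s, ∃ ρ : ℝ, 0 < ρ ∧ ρ ≤ R ∧
      K * volume (closedBall x (4 * ρ)) ≤ A * ∫⁻ y in ball x ρ, g y ∂volume) :
    K * volume s ≤ A * ∫⁻ y, g y ∂volume := by
  classical
  choose! ρ hρ0 hρR hρK using hs
  obtain ⟨u, hu_sub, hu_disj, hu_cov⟩ :=
    Vitali.exists_disjoint_subfamily_covering_enlargement_closedBall s id ρ R
      (fun a ha => hρR a ha) 4 (by norm_num)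
  have hu_count : u.Countable :=
    hu_disj.countable_of_nonempty_interior fun a ha => by
      rw [interior_closedBall _ (hρ0 a (hu_sub ha)).ne']
      exact nonempty_ball.2 (hρ0 a (hu_sub ha))
  have hcov : s ⊆ ⋃ a ∈ u, closedBall (id a) (4 * ρ a) := by
    intro x hx
    obtain ⟨b, hb, hsub⟩ := hu_cov x hx
    exact Set.mem_biUnion hb (hsub (mem_closedBall_self (hρ0 x hx).le))
  haveI : Countable u := hu_count.to_subtype
  have hdisj : Pairwise (Function.onFun Disjoint fun a : u => ball (a : EuclideanSpace ℝ (Fin d)) (ρ a)) := by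
    have h' : Pairwise (Function.onFun Disjoint fun a : u =>
        closedBall (id (a : EuclideanSpace ℝ (Fin d))) (ρ a)) := hu_disj.subtype _ _
    intro a b hab
    exact (h' hab).mono ball_subset_closedBall ball_subset_closedBall
  have hsum : (∑' a : u, ∫⁻ y in ball (a : EuclideanSpace ℝ (Fin d)) (ρ a), g y ∂volume)
      ≤ ∫⁻ y, g y ∂volume := by
    have h1 : (∑' a : u, ∫⁻ y in ball (a : EuclideanSpace ℝ (Fin d)) (ρ a), g y ∂volume)
        = ∫⁻ y, g y ∂(Measure.sum fun a : u =>
            volume.restrict (ball (a : EuclideanSpace ℝ (Fin d)) (ρ a))) :=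
      (lintegral_sum_measure g _).symm
    rw [h1, ← Measure.restrict_iUnion hdisj fun a => measurableSet_ball]
    exact lintegral_mono' Measure.restrict_le_self le_rfl
  calc K * volume s ≤ K * ∑' a : u, volume (closedBall (a : EuclideanSpace ℝ (Fin d)) (4 * ρ a)) := by
        refine mul_le_mul_right ((measure_mono hcov).trans ?_) K
        exact measure_biUnion_le volume hu_count _
    _ = ∑' a : u, K * volume (closedBall (a : EuclideanSpace ℝ (Fin d)) (4 * ρ a)) :=
        ENNReal.tsum_mul_left.symm
    _ ≤ ∑' a : u, A * ∫⁻ y in ball (a : EuclideanSpace ℝ (Fin d)) (ρ a), g y ∂volume :=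
        ENNReal.tsum_le_tsum fun a => hρK a (hu_sub a.2)
    _ = A * ∑' a : u, ∫⁻ y in ball (a : EuclideanSpace ℝ (Fin d)) (ρ a), g y ∂volume :=
        ENNReal.tsum_mul_left
    _ ≤ A * ∫⁻ y, g y ∂volume := mul_le_mul_right hsum A

end Aux

theorem stmt1 (d : ℕ) :
    ∃ C : ℝ, 0 < C ∧ ∀ (h : ℝ), 0 ≤ h →
    ∀ φ : EuclideanSpace ℝ (Fin d) → ℝ, Integrable φ volume →
    ∀ t : ℝ, 0 < t →
    volume {x | ENNReal.ofReal t < coarseMax h φ x} ≤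
      ENNReal.ofReal (C / t) * ∫⁻ x, coarseAvg h φ x ∂volume := by
  classical
  refine ⟨8 ^ d, by positivity, ?_⟩
  intro h hh φ hφ t ht
  set t' := ENNReal.ofReal t with ht'
  have ht'0 : t' ≠ 0 := (ENNReal.ofReal_pos.mpr ht).ne'
  have ht'top : t' ≠ ∞ := ENNReal.ofReal_ne_top
  set I := ∫⁻ x, coarseAvg h φ x ∂volume with hIdef
  -- the final conversion step
  have final : ∀ S : Set (EuclideanSpace ℝ (Fin d)),
      t' * volume S ≤ ENNReal.ofReal ((8:ℝ) ^ d) * I →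
      volume S ≤ ENNReal.ofReal ((8:ℝ) ^ d / t) * I := by
    intro S hS
    have : volume S = t'⁻¹ * (t' * volume S) := by
      rw [← mul_assoc, ENNReal.inv_mul_cancel ht'0 ht'top, one_mul]
    rw [this]
    calc t'⁻¹ * (t' * volume S) ≤ t'⁻¹ * (ENNReal.ofReal ((8:ℝ) ^ d) * I) :=
          mul_le_mul_right hS _
      _ = (ENNReal.ofReal ((8:ℝ) ^ d) / t') * I := by
          rw [← mul_assoc, div_eq_mul_inv, mul_comm t'⁻¹]
      _ = ENNReal.ofReal ((8:ℝ) ^ d / t) * I := by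
          rw [ENNReal.ofReal_div_of_pos ht]
  rcases Nat.eq_zero_or_pos d with hd | hd
  · -- dimension 0 : the space is a single point
    subst hd
    haveI : Subsingleton (EuclideanSpace ℝ (Fin 0)) :=
      ⟨fun a b => by ext i; exact i.elim0⟩
    set s := {x | t' < coarseMax h φ x} with hsdef
    rcases s.eq_empty_or_nonempty with hse | ⟨x₀, hx₀⟩
    · rw [hse]
      simp
    · have hx₀' : t' < ⨆ (r : ℝ) (_ : h < r), ⨍⁻ y in ball x₀ r, (‖φ y‖₊ : ℝ≥0∞) ∂volume := hx₀
      obtain ⟨r, hrh, hlt⟩ : ∃ r, h < r ∧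
          t' < ⨍⁻ y in ball x₀ r, (‖φ y‖₊ : ℝ≥0∞) ∂volume := by
        rcases lt_iSup_iff.mp hx₀' with ⟨r, hr⟩
        rcases lt_iSup_iff.mp hr with ⟨hhr, h'⟩
        exact ⟨r, hhr, h'⟩
      have hr0 : 0 < r := lt_of_le_of_lt hh hrh
      have huniv : ∀ (z : EuclideanSpace ℝ (Fin 0)) (a : ℝ), 0 < a →
          ball z a = Set.univ := by
        intro z a ha
        ext w
        simp only [mem_ball, Set.mem_univ, iff_true]
        rw [Subsingleton.elim w z, dist_self]
        exact ha
      set v := volume (Set.univ : Set (EuclideanSpace ℝ (Fin 0))) with hv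
      have hv0 : v ≠ 0 := by
        rw [hv, ← huniv x₀ r hr0]
        exact (measure_ball_pos volume x₀ hr0).ne'
      have hvtop : v ≠ ∞ := by
        rw [hv, ← huniv x₀ r hr0]
        exact measure_ball_lt_top.ne
      set S := ∫⁻ y, (‖φ y‖₊ : ℝ≥0∞) ∂volume with hSdef
      have hlt' : t' < S / v := by
        rw [setLAverage_eq, huniv x₀ r hr0, Measure.restrict_univ] at hlt
        exact hlt
      have hIS : I = S := by
        by_cases h0 : h = 0
        · simp only [hIdef, coarseAvg, h0, if_true, hSdef]
        · have hh0 : 0 < h := lt_of_le_of_ne hh (Ne.symm h0)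
          have hconst : ∀ x, coarseAvg h φ x = S / v := by
            intro x
            simp only [coarseAvg, h0, if_false]
            rw [setLAverage_eq, huniv x h hh0, Measure.restrict_univ]
          rw [hIdef, lintegral_congr hconst, lintegral_const]
          exact ENNReal.div_mul_cancel hv0 hvtop
      have hvS : t' * v < S := by
        rwa [← ENNReal.lt_div_iff_mul_lt (Or.inl hv0) (Or.inl hvtop)]
      have hvol : volume s ≤ v := measure_mono (Set.subset_univ s)
      have goal : t' * volume s ≤ ENNReal.ofReal ((8:ℝ) ^ 0) * I := by
        rw [hIS]
        calc t' * volume s ≤ t' * v := mul_le_mul_right hvol _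
          _ ≤ S := hvS.le
          _ = ENNReal.ofReal ((8:ℝ) ^ 0) * S := by
              norm_num
      exact final s goal
  · -- dimension ≥ 1
    have h1 : AEMeasurable (fun y => (‖φ y‖₊ : ℝ≥0∞)) volume := hφ.1.aemeasurable.nnnorm.coe_nnreal_ennreal
    set f := h1.mk _ with hfdef
    have hf : Measurable f := h1.measurable_mk
    have heq : (fun y => (‖φ y‖₊ : ℝ≥0∞)) =ᵐ[volume] f := h1.ae_eq_mk
    have hball : ∀ (x : EuclideanSpace ℝ (Fin d)) (a : ℝ),
        (∫⁻ y in ball x a, (‖φ y‖₊ : ℝ≥0∞) ∂volume) = ∫⁻ y in ball x a, f y ∂volume :=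
      fun x a => lintegral_congr_ae (ae_restrict_of_ae heq)
    set g : EuclideanSpace ℝ (Fin d) → ℝ≥0∞ :=
      fun x => if h = 0 then f x else ⨍⁻ y in ball x h, f y ∂volume with hgdef
    have hgI : (∫⁻ x, g x ∂volume) = I := by
      rw [hIdef]
      refine lintegral_congr_ae ?_
      by_cases h0 : h = 0
      · filter_upwards [heq] with x hx
        simp only [hgdef, coarseAvg, h0, if_true, hx]
      · refine ae_of_all _ fun x => ?_
        simp only [hgdef, coarseAvg, h0, if_false]
        rw [setLAverage_eq, setLAverage_eq, hball x h]
    by_cases hItop : I = ∞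
    · rw [hItop, ENNReal.mul_top]
      · exact le_top
      · rw [Ne, ENNReal.ofReal_eq_zero, not_le]
        positivity
    -- basic constants
    set B1 := volume (ball (0 : EuclideanSpace ℝ (Fin d)) 1) with hB1
    have hB1pos : B1 ≠ 0 := (measure_ball_pos volume 0 one_pos).ne'
    have hB1top : B1 ≠ ∞ := measure_ball_lt_top.ne
    have hfinrank : Module.finrank ℝ (EuclideanSpace ℝ (Fin d)) = d :=
      finrank_euclideanSpace_fin
    set c0 : ℝ := (I / (t' * B1)).toReal with hc0def
    set R : ℝ := 2 * max 1 c0 with hRdef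
    set s := {x | t' < coarseMax h φ x} with hsdef
    have hyp : ∀ x ∈ s, ∃ ρ : ℝ, 0 < ρ ∧ ρ ≤ R ∧
        t' * volume (closedBall x (4 * ρ)) ≤
          ENNReal.ofReal ((8:ℝ) ^ d) * ∫⁻ y in ball x ρ, g y ∂volume := by
      intro x hx
      have hx' : t' < ⨆ (r : ℝ) (_ : h < r), ⨍⁻ y in ball x r, (‖φ y‖₊ : ℝ≥0∞) ∂volume := hx
      obtain ⟨r, hrh, hlt⟩ : ∃ r, h < r ∧
          t' < ⨍⁻ y in ball x r, (‖φ y‖₊ : ℝ≥0∞) ∂volume := by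
        rcases lt_iSup_iff.mp hx' with ⟨r, hr⟩
        rcases lt_iSup_iff.mp hr with ⟨hhr, h'⟩
        exact ⟨r, hhr, h'⟩
      have hr0 : 0 < r := lt_of_le_of_lt hh hrh
      set v := volume (ball x r) with hv
      have hv0 : v ≠ 0 := (measure_ball_pos volume x hr0).ne'
      have hvtop : v ≠ ∞ := measure_ball_lt_top.ne
      have hlt' : t' < (∫⁻ y in ball x r, f y ∂volume) / v := by
        rw [setLAverage_eq, hball x r] at hlt
        exact hlt
      have hmul : t' * v < ∫⁻ y in ball x r, f y ∂volume := by
        rwa [← ENNReal.lt_div_iff_mul_lt (Or.inl hv0) (Or.inl hvtop)]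
      have hkey : (∫⁻ y in ball x r, f y ∂volume) ≤ ∫⁻ z in ball x (2*r), g z ∂volume := by
        by_cases h0 : h = 0
        · have hsub : ball x r ⊆ ball x (2*r) := ball_subset_ball (by linarith)
          calc (∫⁻ y in ball x r, f y ∂volume) ≤ ∫⁻ y in ball x (2*r), f y ∂volume :=
                lintegral_mono_set hsub
            _ = ∫⁻ z in ball x (2*r), g z ∂volume := by
                refine lintegral_congr fun z => ?_
                simp [hgdef, h0]
        · have hh0 : 0 < h := lt_of_le_of_ne hh (Ne.symm h0)
          have := coarse_key h r hh0 hrh f hf x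
          calc (∫⁻ y in ball x r, f y ∂volume)
              ≤ ∫⁻ z in ball x (2*r), ⨍⁻ y in ball z h, f y ∂volume ∂volume := this
            _ = ∫⁻ z in ball x (2*r), g z ∂volume := by
                refine lintegral_congr fun z => ?_
                simp [hgdef, h0]
      have hchain : t' * v < I := by
        calc t' * v < ∫⁻ y in ball x r, f y ∂volume := hmul
          _ ≤ ∫⁻ z in ball x (2*r), g z ∂volume := hkey
          _ ≤ ∫⁻ z, g z ∂volume := setLIntegral_le_lintegral _ _
          _ = I := hgI
      -- radius bound
      have hvval : v = ENNReal.ofReal (r ^ d) * B1 := by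
        rw [hv, Measure.addHaar_ball_of_pos volume x hr0, hfinrank]
      have hrd : r ^ d ≤ c0 := by
        have h1' : ENNReal.ofReal (r ^ d) * (t' * B1) ≤ I := by
          calc ENNReal.ofReal (r ^ d) * (t' * B1) = t' * v := by
                rw [hvval]; ring
            _ ≤ I := hchain.le
        have h2' : ENNReal.ofReal (r ^ d) ≤ I / (t' * B1) :=
          (ENNReal.le_div_iff_mul_le (Or.inl (mul_ne_zero ht'0 hB1pos))
            (Or.inl (ENNReal.mul_ne_top ht'top hB1top))).mpr h1'
        have h3' : I / (t' * B1) ≠ ∞ :=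
          (ENNReal.div_lt_top hItop (mul_ne_zero ht'0 hB1pos)).ne
        rw [hc0def]
        exact (ENNReal.ofReal_le_iff_le_toReal h3').mp h2'
      have hrR : 2 * r ≤ R := by
        rw [hRdef]
        have : r ≤ max 1 c0 := by
          rcases le_total r 1 with h1' | h1'
          · exact h1'.trans (le_max_left _ _)
          · have : r ≤ r ^ d := le_self_pow₀ h1' (by omega)
            exact (this.trans hrd).trans (le_max_right _ _)
        linarith
      refine ⟨2 * r, by linarith, hrR, ?_⟩
      have h4r : 4 * (2 * r) = 8 * r := by ring
      have hcb : volume (closedBall x (8 * r)) =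
          ENNReal.ofReal ((8:ℝ) ^ d) * v := by
        rw [Measure.addHaar_closedBall volume x (by positivity : (0:ℝ) ≤ 8 * r), hfinrank,
          hvval, mul_pow, ENNReal.ofReal_mul (by positivity), mul_assoc]
      rw [h4r, hcb]
      calc t' * (ENNReal.ofReal ((8:ℝ) ^ d) * v)
          = ENNReal.ofReal ((8:ℝ) ^ d) * (t' * v) := by ring
        _ ≤ ENNReal.ofReal ((8:ℝ) ^ d) * ∫⁻ y in ball x (2*r), g y ∂volume :=
            mul_le_mul_right (hmul.le.trans hkey) _
    have := weak_bound g s t' (ENNReal.ofReal ((8:ℝ) ^ d)) R hyp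
    rw [hgI] at this
    exact final s this
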